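/- The fixed point of the best-response map B_n(a) = β_n(μ − Σ_{m≠n} τ_m a_m)/(λ_n(1+β_n)) + β_n(λ_n − τ_n)a_n/(λ_n(1+β_n)) is unique and given by a_n^{CE} = β_n μ / (λ_n(1 + Σ_{m=1}^N τ_m β_m/λ_m)) for all n; equivalently, a^{CE} solves (λ_n + β_n τ_n)a_n + β_n Σ_{m≠n} τ_m a_m = β_n μ for all n. -/

import Mathlib

open Finset

/-- The unique fixed point of the best-response map is
`a_n^{CE} = β_n μ / (λ_n (1 + Σ_m τ_m β_m / λ_m))`; equivalently, the fixed-point (linear)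
system holds iff `a` equals this point. -/
theorem best_response_fixed_point (N : ℕ) (hN : 1 ≤ N)
    (β τ lam : Fin N → ℝ) (μ : ℝ)
    (hβ : ∀ n, 0 < β n) (hτ : ∀ n, 0 < τ n) (hlam : ∀ n, 0 < lam n) (hμ : 0 < μ)
    (B : (Fin N → ℝ) → Fin N → ℝ)
    (hB : ∀ a n, B a n
        = β n * (μ - ∑ m ∈ univ.erase n, τ m * a m) / (lam n * (1 + β n))
          + β n * (lam n - τ n) * a n / (lam n * (1 + β n)))
    (a : Fin N → ℝ) :
    (∀ n, a n = B a n)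
      ↔ (∀ n, a n = β n * μ / (lam n * (1 + ∑ m, τ m * β m / lam m))) := by
  have hNpos : 0 < N := hN
  haveI : NeZero N := ⟨by omega⟩
  set C : ℝ := ∑ m, τ m * β m / lam m with hCdef
  have hCpos : 0 < C := by
    apply Finset.sum_pos
    · intro m _
      have := hτ m; have := hβ m; have := hlam m
      positivity
    · exact Finset.univ_nonempty
  have h1C : (0:ℝ) < 1 + C := by linarith
  -- reformulate the fixed-point equation as a linear system
  have key : ∀ n, (a n = B a n) ↔
      lam n * a n + β n * (∑ m, τ m * a m) = β n * μ := by
    intro n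
    have hlamn := hlam n
    have hβn := hβ n
    have hne : lam n * (1 + β n) ≠ 0 := by positivity
    have herase : ∑ m ∈ univ.erase n, τ m * a m
        = (∑ m, τ m * a m) - τ n * a n :=
      Finset.sum_erase_eq_sub (Finset.mem_univ n)
    rw [hB, herase, ← add_div, eq_div_iff hne]
    constructor <;> intro h <;> nlinarith [h]
  constructor
  · intro hfix
    have hlin : ∀ n, lam n * a n + β n * (∑ m, τ m * a m) = β n * μ :=
      fun n => (key n).mp (hfix n)
    set S : ℝ := ∑ m, τ m * a m with hSdef
    have ha : ∀ n, a n = β n * (μ - S) / lam n := by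
      intro n
      have h := hlin n
      have : lam n ≠ 0 := ne_of_gt (hlam n)
      field_simp
      linarith
    have hS : S = (μ - S) * C := by
      calc S = ∑ m, τ m * (β m * (μ - S) / lam m) := by
              rw [hSdef]; exact Finset.sum_congr rfl fun m _ => by rw [ha m]
        _ = ∑ m, (μ - S) * (τ m * β m / lam m) := by
              apply Finset.sum_congr rfl; intro m _
              have : lam m ≠ 0 := ne_of_gt (hlam m)
              field_simp
        _ = (μ - S) * C := by rw [← Finset.mul_sum]
    have hSval : μ - S = μ / (1 + C) := by
      have : S * (1 + C) = C * μ := by nlinarith [hS]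
      field_simp
      nlinarith [this]
    intro n
    rw [ha n, hSval]
    have h1 : lam n ≠ 0 := ne_of_gt (hlam n)
    have h2 : (1:ℝ) + C ≠ 0 := ne_of_gt h1C
    field_simp
  · intro ha n
    rw [key n]
    have hS : (∑ m, τ m * a m) = μ / (1 + C) * C := by
      calc (∑ m, τ m * a m)
          = ∑ m, μ / (1 + C) * (τ m * β m / lam m) := by
            apply Finset.sum_congr rfl; intro m _
            rw [ha m]
            have h1 : lam m ≠ 0 := ne_of_gt (hlam m)
            have h2 : (1:ℝ) + C ≠ 0 := ne_of_gt h1C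
            field_simp
        _ = μ / (1 + C) * C := by rw [← Finset.mul_sum]
    rw [hS, ha n]
    have h1 : lam n ≠ 0 := ne_of_gt (hlam n)
    have h2 : (1:ℝ) + C ≠ 0 := ne_of_gt h1C
    field_simp
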